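/- Let n ≥ 1, let W be an n×n real doubly stochastic matrix (all entries nonnegative, every row sum and every column sum equal to 1) such that every entry of W^n is strictly positive. Let x : ℕ → ℝ^n evolve according to x(k+1) = W(x(k) + θ(k)), where θ : ℕ → ℝ^n is a noise sequence. If there exist α > 0 and ρ ∈ [0,1) such that ‖θ(k)‖_∞ ≤ α ρ^k for all k, and the total noise is zero in the sense that lim_{K→∞} ∑_{k=0}^{K} ∑_{i=1}^{n} θ_i(k) = 0, then for every i, lim_{k→∞} x_i(k) = x̄, where x̄ = (1/n) ∑_{i=1}^n x_i(0). -/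
import Mathlib
open Filter Finset

section aux
variable {ι : Type*} [Fintype ι] [Nonempty ι]

noncomputable def vmax (y : ι → ℝ) : ℝ := univ.sup' univ_nonempty y
noncomputable def vmin (y : ι → ℝ) : ℝ := univ.inf' univ_nonempty y

lemma le_vmax (y : ι → ℝ) (i : ι) : y i ≤ vmax y := Finset.le_sup' y (mem_univ i)
lemma vmin_le (y : ι → ℝ) (i : ι) : vmin y ≤ y i := Finset.inf'_le y (mem_univ i)
lemma vmin_le_vmax (y : ι → ℝ) : vmin y ≤ vmax y :=
  (vmin_le y (Classical.arbitrary ι)).trans (le_vmax y _)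

lemma stoch_upper (P : Matrix ι ι ℝ) (δ : ℝ) (hδ0 : 0 ≤ δ) (hδ : ∀ i j, δ ≤ P i j)
    (hrow : ∀ i, ∑ j, P i j = 1) (y : ι → ℝ) (i : ι) :
    P.mulVec y i ≤ vmax y - δ * (vmax y - vmin y) := by
  obtain ⟨j0, _, hj0⟩ := Finset.exists_mem_eq_inf' (univ_nonempty : (univ : Finset ι).Nonempty) y
  have key : P.mulVec y i = vmax y - ∑ j, P i j * (vmax y - y j) := by
    simp only [Matrix.mulVec, dotProduct]
    have : ∑ j, P i j * (vmax y - y j) = (∑ j, P i j) * vmax y - ∑ j, P i j * y j := by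
      rw [Finset.sum_mul, ← Finset.sum_sub_distrib]; congr 1; ext j; ring
    rw [this, hrow]; ring
  rw [key]
  have h1 : P i j0 * (vmax y - y j0) ≤ ∑ j, P i j * (vmax y - y j) := by
    apply Finset.single_le_sum (f := fun j => P i j * (vmax y - y j)) _ (mem_univ j0)
    intro j _
    exact mul_nonneg (hδ0.trans (hδ i j)) (sub_nonneg.2 (le_vmax y j))
  have h2 : δ * (vmax y - vmin y) ≤ P i j0 * (vmax y - y j0) := by
    rw [← hj0] at *
    exact mul_le_mul (hδ i j0) le_rfl (sub_nonneg.2 (vmin_le_vmax y)) (hδ0.trans (hδ i j0))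
  linarith

lemma stoch_lower (P : Matrix ι ι ℝ) (δ : ℝ) (hδ0 : 0 ≤ δ) (hδ : ∀ i j, δ ≤ P i j)
    (hrow : ∀ i, ∑ j, P i j = 1) (y : ι → ℝ) (i : ι) :
    vmin y + δ * (vmax y - vmin y) ≤ P.mulVec y i := by
  obtain ⟨j1, _, hj1⟩ := Finset.exists_mem_eq_sup' (univ_nonempty : (univ : Finset ι).Nonempty) y
  have key : P.mulVec y i = vmin y + ∑ j, P i j * (y j - vmin y) := by
    simp only [Matrix.mulVec, dotProduct]
    have : ∑ j, P i j * (y j - vmin y) = ∑ j, P i j * y j - (∑ j, P i j) * vmin y := by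
      rw [Finset.sum_mul, ← Finset.sum_sub_distrib]; congr 1; ext j; ring
    rw [this, hrow]; ring
  rw [key]
  have h1 : P i j1 * (y j1 - vmin y) ≤ ∑ j, P i j * (y j - vmin y) := by
    apply Finset.single_le_sum (f := fun j => P i j * (y j - vmin y)) _ (mem_univ j1)
    intro j _
    exact mul_nonneg (hδ0.trans (hδ i j)) (sub_nonneg.2 (vmin_le y j))
  have h2 : δ * (vmax y - vmin y) ≤ P i j1 * (y j1 - vmin y) := by
    rw [← hj1] at *
    exact mul_le_mul (hδ i j1) le_rfl (sub_nonneg.2 (vmin_le_vmax y)) (hδ0.trans (hδ i j1))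
  linarith

lemma spread_contract (P : Matrix ι ι ℝ) (δ : ℝ) (hδ0 : 0 ≤ δ) (hδ : ∀ i j, δ ≤ P i j)
    (hrow : ∀ i, ∑ j, P i j = 1) (y : ι → ℝ) :
    vmax (P.mulVec y) - vmin (P.mulVec y) ≤ (1 - 2 * δ) * (vmax y - vmin y) := by
  have h1 : vmax (P.mulVec y) ≤ vmax y - δ * (vmax y - vmin y) :=
    Finset.sup'_le _ _ fun i _ => stoch_upper P δ hδ0 hδ hrow y i
  have h2 : vmin y + δ * (vmax y - vmin y) ≤ vmin (P.mulVec y) :=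
    Finset.le_inf' _ _ fun i _ => stoch_lower P δ hδ0 hδ hrow y i
  linarith

lemma spread_add (y z : ι → ℝ) :
    vmax (y + z) - vmin (y + z) ≤ (vmax y - vmin y) + 2 * ‖z‖ := by
  have h1 : vmax (y + z) ≤ vmax y + ‖z‖ := by
    apply Finset.sup'_le
    intro i _
    have := norm_le_pi_norm z i
    have h2 := le_vmax y i
    simp only [Pi.add_apply]
    have : z i ≤ ‖z‖ := (le_abs_self _).trans (by simpa [Real.norm_eq_abs] using this)
    linarith
  have h2 : vmin y - ‖z‖ ≤ vmin (y + z) := by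
    apply Finset.le_inf'
    intro i _
    have h3 := norm_le_pi_norm z i
    have h2 := vmin_le y i
    simp only [Pi.add_apply]
    have : -‖z‖ ≤ z i := (neg_le_neg (by simpa [Real.norm_eq_abs] using h3)).trans
      (neg_abs_le _)
    linarith
  linarith

omit [Nonempty ι] in
lemma norm_mulVec_le (P : Matrix ι ι ℝ) (hP : ∀ i j, 0 ≤ P i j)
    (hrow : ∀ i, ∑ j, P i j = 1) (y : ι → ℝ) : ‖P.mulVec y‖ ≤ ‖y‖ := by
  rw [pi_norm_le_iff_of_nonneg (norm_nonneg y)]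
  intro i
  simp only [Matrix.mulVec, dotProduct, Real.norm_eq_abs]
  calc |∑ j, P i j * y j| ≤ ∑ j, |P i j * y j| := Finset.abs_sum_le_sum_abs _ _
    _ ≤ ∑ j, P i j * ‖y‖ := by
        apply Finset.sum_le_sum
        intro j _
        rw [abs_mul, abs_of_nonneg (hP i j)]
        exact mul_le_mul_of_nonneg_left (by simpa [Real.norm_eq_abs] using norm_le_pi_norm y j) (hP i j)
    _ = ‖y‖ := by rw [← Finset.sum_mul, hrow, one_mul]

end aux

lemma geom_bound (a : ℕ → ℝ) (ha : ∀ t, 0 ≤ a t) (q B : ℝ) (hq0 : 0 ≤ q) (hq1 : q < 1)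
    (hB : 0 ≤ B) (hrec : ∀ t, a (t + 1) ≤ q * a t + B * q ^ t) :
    ∃ C, 0 ≤ C ∧ ∀ t, a t ≤ C * ((1 + q) / 2) ^ t := by
  set q1 := (1 + q) / 2 with hq1def
  have hqlt : q < q1 := by rw [hq1def]; linarith
  have hq10 : 0 < q1 := by rw [hq1def]; linarith
  have hgap : 0 < q1 - q := by linarith
  refine ⟨a 0 + B / (q1 - q), add_nonneg (ha 0) (div_nonneg hB hgap.le), ?_⟩
  set C := a 0 + B / (q1 - q) with hC
  have hC0 : 0 ≤ C := add_nonneg (ha 0) (div_nonneg hB hgap.le)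
  have hCB : B ≤ C * (q1 - q) := by
    rw [hC, add_mul, div_mul_cancel₀ _ hgap.ne']
    nlinarith [ha 0]
  intro t
  induction t with
  | zero => simpa using le_add_of_nonneg_right (by positivity)
  | succ t ih =>
    have hqt : q ^ t ≤ q1 ^ t := pow_le_pow_left₀ hq0 hqlt.le t
    calc a (t + 1) ≤ q * a t + B * q ^ t := hrec t
      _ ≤ q * (C * q1 ^ t) + B * q1 ^ t := by
          have := mul_le_mul_of_nonneg_left ih hq0
          have := mul_le_mul_of_nonneg_left hqt hB
          linarith
      _ = (q * C + B) * q1 ^ t := by ring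
      _ ≤ (C * q1) * q1 ^ t := by
          apply mul_le_mul_of_nonneg_right _ (pow_nonneg hq10.le t)
          nlinarith
      _ = C * q1 ^ (t + 1) := by ring

/-- If the added noise is exponentially decaying and has zero total sum, then the
noisy consensus iteration `x(k+1) = W(x(k) + θ(k))` with a doubly stochastic matrix `W`
whose `n`-th power is entrywise positive converges to the exact average of the
initial states. -/
theorem scda_sufficient_condition
    (n : ℕ) (hn : 1 ≤ n) (W : Matrix (Fin n) (Fin n) ℝ)
    (hW_nonneg : ∀ i j, 0 ≤ W i j)
    (hW_row : ∀ i, ∑ j, W i j = 1)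
    (hW_col : ∀ j, ∑ i, W i j = 1)
    (hWn_pos : ∀ i j, 0 < (W ^ n) i j)
    (x θ : ℕ → Fin n → ℝ)
    (hdyn : ∀ k, x (k + 1) = W.mulVec (x k + θ k))
    (α ρ : ℝ) (hα : 0 < α) (hρ0 : 0 ≤ ρ) (hρ1 : ρ < 1)
    (hθ : ∀ k, ‖θ k‖ ≤ α * ρ ^ k)
    (hzero : Tendsto (fun K => ∑ k ∈ Finset.range (K + 1), ∑ i, θ k i)
      atTop (nhds 0)) :
    ∀ i, Tendsto (fun k => x k i) atTop (nhds ((∑ i, x 0 i) / n)) := by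
  haveI : Nonempty (Fin n) := ⟨⟨0, hn⟩⟩
  have hn0 : 0 < n := hn
  -- abbreviation for the spread
  set V : (Fin n → ℝ) → ℝ := fun y => vmax y - vmin y with hV
  have hV0' : ∀ y, 0 ≤ V y := fun y => sub_nonneg.2 (vmin_le_vmax y)
  -- powers of W are row-stochastic with nonnegative entries
  have hpow_nonneg : ∀ m i j, 0 ≤ (W ^ m) i j := by
    intro m
    induction m with
    | zero => intro i j; simp [Matrix.one_apply]; positivity
    | succ m ih =>
      intro i j
      rw [pow_succ, Matrix.mul_apply]
      exact Finset.sum_nonneg fun l _ => mul_nonneg (ih i l) (hW_nonneg l j)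
  have hpow_row : ∀ m i, ∑ j, (W ^ m) i j = 1 := by
    intro m
    induction m with
    | zero => intro i; simp [Matrix.one_apply]
    | succ m ih =>
      intro i
      simp only [pow_succ, Matrix.mul_apply]
      rw [Finset.sum_comm]
      calc ∑ l, ∑ j, (W ^ m) i l * W l j = ∑ l, (W ^ m) i l * ∑ j, W l j := by
            simp [Finset.mul_sum]
        _ = 1 := by simp [hW_row, ih]
  -- minimum entry of W ^ n
  set δ : ℝ := univ.inf' univ_nonempty (fun p : Fin n × Fin n => (W ^ n) p.1 p.2) with hδdef
  have hδpos : 0 < δ := (Finset.lt_inf'_iff _).2 fun p _ => hWn_pos p.1 p.2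
  have hδle : ∀ i j, δ ≤ (W ^ n) i j := fun i j =>
    Finset.inf'_le _ (mem_univ ((i, j) : Fin n × Fin n))
  set c : ℝ := max 0 (1 - 2 * δ) with hcdef
  have hc0 : 0 ≤ c := le_max_left _ _
  have hc1 : c < 1 := max_lt one_pos (by linarith)
  -- one-step spread estimate
  have hstepV : ∀ k, V (x (k + 1)) ≤ V (x k) + 2 * (α * ρ ^ k) := by
    intro k
    rw [hdyn k]
    have h1 : V (W.mulVec (x k + θ k)) ≤ (1 - 2 * 0) * V (x k + θ k) :=
      spread_contract W 0 le_rfl (fun i j => hW_nonneg i j) hW_row _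
    have h2 : V (x k + θ k) ≤ V (x k) + 2 * ‖θ k‖ := spread_add _ _
    have h3 := hθ k
    have h4 := hV0' (x k + θ k)
    simp only [mul_zero, sub_zero, one_mul] at h1
    linarith
  -- m-step error representation
  have herr : ∀ k m, ∃ e : Fin n → ℝ,
      x (k + m) = (W ^ m).mulVec (x k) + e ∧ ‖e‖ ≤ m * (α * ρ ^ k) := by
    intro k m
    induction m with
    | zero =>
      exact ⟨0, by simp [Matrix.one_mulVec], by simp⟩
    | succ m ih =>
      obtain ⟨e, he, hne⟩ := ih
      refine ⟨W.mulVec (e + θ (k + m)), ?_, ?_⟩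
      · have : k + (m + 1) = (k + m) + 1 := by ring
        rw [this, hdyn (k + m), he]
        rw [show (W ^ m).mulVec (x k) + e + θ (k + m)
              = (W ^ m).mulVec (x k) + (e + θ (k + m)) by abel]
        rw [Matrix.mulVec_add, Matrix.mulVec_mulVec, ← pow_succ']
      · have h1 : ‖W.mulVec (e + θ (k + m))‖ ≤ ‖e + θ (k + m)‖ :=
          norm_mulVec_le W hW_nonneg hW_row _
        have h2 : ‖e + θ (k + m)‖ ≤ ‖e‖ + ‖θ (k + m)‖ := norm_add_le _ _
        have h3 : ‖θ (k + m)‖ ≤ α * ρ ^ k := by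
          calc ‖θ (k + m)‖ ≤ α * ρ ^ (k + m) := hθ _
            _ ≤ α * ρ ^ k := by
                rw [pow_add, ← mul_assoc]
                have h0 : 0 ≤ α * ρ ^ k := mul_nonneg hα.le (pow_nonneg hρ0 k)
                nlinarith [pow_le_one₀ hρ0 hρ1.le (n := m)]
        push_cast
        linarith
  -- contraction of the spread over n steps
  set a : ℕ → ℝ := fun t => V (x (n * t)) with hadef
  have ha0 : ∀ t, 0 ≤ a t := fun t => hV0' _
  set q : ℝ := max c (ρ ^ n) with hqdef
  have hq0 : 0 ≤ q := le_trans hc0 (le_max_left _ _)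
  have hq1 : q < 1 := max_lt hc1 (pow_lt_one₀ hρ0 hρ1 hn0.ne')
  have hB0 : (0 : ℝ) ≤ 2 * n * α := by positivity
  have hrec : ∀ t, a (t + 1) ≤ q * a t + (2 * n * α) * q ^ t := by
    intro t
    obtain ⟨e, he, hne⟩ := herr (n * t) n
    have hkey : n * (t + 1) = n * t + n := by ring
    have h1 : V (x (n * t + n)) ≤ V ((W ^ n).mulVec (x (n * t))) + 2 * ‖e‖ := by
      rw [he]; exact spread_add _ _
    have h2 : V ((W ^ n).mulVec (x (n * t))) ≤ (1 - 2 * δ) * V (x (n * t)) :=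
      spread_contract (W ^ n) δ hδpos.le hδle (hpow_row n) _
    have h3 : (1 - 2 * δ) * V (x (n * t)) ≤ c * V (x (n * t)) :=
      mul_le_mul_of_nonneg_right (le_max_right _ _) (hV0' _)
    have h4 : c * V (x (n * t)) ≤ q * V (x (n * t)) :=
      mul_le_mul_of_nonneg_right (le_max_left _ _) (hV0' _)
    have h5 : ‖e‖ ≤ n * (α * q ^ t) := by
      refine hne.trans ?_
      have : ρ ^ (n * t) = (ρ ^ n) ^ t := by rw [pow_mul]
      have h6 : (ρ ^ n) ^ t ≤ q ^ t :=
        pow_le_pow_left₀ (pow_nonneg hρ0 n) (le_max_right _ _) t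
      rw [this]
      nlinarith
    show V (x (n * (t + 1))) ≤ q * a t + (2 * n * α) * q ^ t
    rw [hkey]
    calc V (x (n * t + n)) ≤ V ((W ^ n).mulVec (x (n * t))) + 2 * ‖e‖ := h1
      _ ≤ q * V (x (n * t)) + 2 * (n * (α * q ^ t)) := by linarith
      _ = q * a t + (2 * n * α) * q ^ t := by rw [hadef]; ring
  obtain ⟨C, hC0, hCb⟩ := geom_bound a ha0 q (2 * n * α) hq0 hq1 hB0 hrec
  set q2 : ℝ := (1 + q) / 2 with hq2def
  have hq20 : 0 ≤ q2 := by rw [hq2def]; linarith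
  have hq21 : q2 < 1 := by rw [hq2def]; linarith
  -- bound the spread along the whole trajectory
  have hiter : ∀ t s, V (x (n * t + s)) ≤ V (x (n * t)) + 2 * s * (α * ρ ^ (n * t)) := by
    intro t s
    induction s with
    | zero => simp
    | succ s ih =>
      have h1 : V (x (n * t + s + 1)) ≤ V (x (n * t + s)) + 2 * (α * ρ ^ (n * t + s)) :=
        hstepV _
      have h2 : ρ ^ (n * t + s) ≤ ρ ^ (n * t) := by
        rw [pow_add]
        have : ρ ^ s ≤ 1 := pow_le_one₀ hρ0 hρ1.le
        nlinarith [pow_nonneg hρ0 (n * t)]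
      have : n * t + (s + 1) = n * t + s + 1 := by ring
      rw [this]
      push_cast
      nlinarith
  have hbound : ∀ k, V (x k) ≤ (C + 2 * n * α) * q2 ^ (k / n) := by
    intro k
    have hk : n * (k / n) + k % n = k := Nat.div_add_mod k n
    have hs : ((k % n : ℕ) : ℝ) ≤ (n : ℝ) := Nat.cast_le.2 (Nat.mod_lt k hn0).le
    have h1 := hiter (k / n) (k % n)
    rw [hk] at h1
    have h2 : V (x (n * (k / n))) ≤ C * q2 ^ (k / n) := hCb (k / n)
    have h3 : ρ ^ (n * (k / n)) ≤ q2 ^ (k / n) := by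
      rw [pow_mul]
      refine pow_le_pow_left₀ (pow_nonneg hρ0 n) ?_ _
      calc ρ ^ n ≤ q := le_max_right _ _
        _ ≤ q2 := by rw [hq2def]; linarith
    have hρnt : 0 ≤ ρ ^ (n * (k / n)) := pow_nonneg hρ0 _
    have h4 : 2 * ((k % n : ℕ) : ℝ) * (α * ρ ^ (n * (k / n)))
        ≤ 2 * n * α * ρ ^ (n * (k / n)) := by
      nlinarith [mul_nonneg (sub_nonneg.2 hs) (mul_nonneg hα.le hρnt)]
    have h5 : 2 * n * α * ρ ^ (n * (k / n)) ≤ 2 * n * α * q2 ^ (k / n) :=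
      mul_le_mul_of_nonneg_left h3 hB0
    linarith
  -- the spread tends to zero
  have hVtend : Tendsto (fun k => V (x k)) atTop (nhds 0) := by
    apply squeeze_zero (fun k => hV0' (x k)) hbound
    have h1 : Tendsto (fun t : ℕ => (C + 2 * n * α) * q2 ^ t) atTop (nhds 0) := by
      simpa using (tendsto_pow_atTop_nhds_zero_of_lt_one hq20 hq21).const_mul
        (C + 2 * n * α)
    have hdiv : Tendsto (fun k : ℕ => k / n) atTop atTop :=
      tendsto_atTop_atTop.2 fun b => ⟨b * n, fun k hk => (Nat.le_div_iff_mul_le hn0).2 hk⟩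
    exact h1.comp hdiv
  -- the sum of the entries
  set S : ℕ → ℝ := fun k => ∑ i, x k i with hSdef
  have hcolsum : ∀ v : Fin n → ℝ, ∑ i, W.mulVec v i = ∑ j, v j := by
    intro v
    simp only [Matrix.mulVec, dotProduct]
    rw [Finset.sum_comm]
    calc ∑ j, ∑ i, W i j * v j = ∑ j, (∑ i, W i j) * v j := by simp [Finset.sum_mul]
      _ = ∑ j, v j := by simp [hW_col]
  have hSstep : ∀ k, S (k + 1) = S k + ∑ i, θ k i := by
    intro k
    show (∑ i, x (k + 1) i) = (∑ i, x k i) + ∑ i, θ k i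
    rw [hdyn k, hcolsum]
    simp [Finset.sum_add_distrib]
  have hSform : ∀ K, S K = S 0 + ∑ k ∈ Finset.range K, ∑ i, θ k i := by
    intro K
    induction K with
    | zero => simp
    | succ K ih => rw [Finset.sum_range_succ, hSstep K, ih]; ring
  have hpart : Tendsto (fun K => ∑ k ∈ Finset.range K, ∑ i, θ k i) atTop (nhds 0) :=
    (tendsto_add_atTop_iff_nat 1).mp hzero
  have hStend : Tendsto S atTop (nhds (S 0)) := by
    have h := hpart.const_add (S 0)
    simp only [← hSform, add_zero] at h
    exact h
  -- conclusion
  intro i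
  have hlim : Tendsto (fun k => S k / (n : ℝ)) atTop (nhds (S 0 / (n : ℝ))) :=
    hStend.div_const _
  have hgoal : Tendsto (fun k => x k i) atTop (nhds (S 0 / (n : ℝ))) := by
    apply hlim.congr_dist
    apply squeeze_zero (fun k => dist_nonneg) _ hVtend
    intro k
    have h1 : vmin (x k) ≤ x k i := vmin_le _ i
    have h2 : x k i ≤ vmax (x k) := le_vmax _ i
    have h3 : S k ≤ n * vmax (x k) := by
      calc S k = ∑ j, x k j := rfl
        _ ≤ ∑ _j : Fin n, vmax (x k) := Finset.sum_le_sum fun j _ => le_vmax _ j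
        _ = n * vmax (x k) := by simp [Finset.sum_const, mul_comm]
    have h4 : (n : ℝ) * vmin (x k) ≤ S k := by
      calc (n : ℝ) * vmin (x k) = ∑ _j : Fin n, vmin (x k) := by
            simp [Finset.sum_const, mul_comm]
        _ ≤ ∑ j, x k j := Finset.sum_le_sum fun j _ => vmin_le _ j
        _ = S k := rfl
    have hnR : (0 : ℝ) < n := by exact_mod_cast hn0
    have h5 : S k / n ≤ vmax (x k) := by
      rw [div_le_iff₀ hnR]; linarith
    have h6 : vmin (x k) ≤ S k / n := by
      rw [le_div_iff₀ hnR]; linarith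
    rw [Real.dist_eq]
    rw [abs_le]
    constructor <;> [skip; skip] <;> simp only [hV] <;> [linarith; linarith]
  exact hgoal
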